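/- With the data of a metric Lie algebra 𝔤, an orthogonal 𝔤-module (V, ρ, (·,·)), and a bilinear map D : V × V → 𝔤 satisfying ⟪D(a,b), x⟫ = (ρ(x)a, b) for all x ∈ 𝔤 and a, b ∈ V, the ternary bracket [a, b, c] := ρ(D(a,b)) c on V is antisymmetric in its first two arguments and satisfies the fundamental identity [a,b,[c,d,e]] = [[a,b,c],d,e] + [c,[a,b,d],e] + [c,d,[a,b,e]] for all a, b, c, d, e ∈ V. -/

import Mathlib

attribute [local instance 100] LieRing.ofAssociativeRing

/-- Given a metric Lie algebra `g` (with invariant nondegenerate symmetric form `κ`),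
an orthogonal `g`-module `(V, ρ, Bf)` and a bilinear map `D : V × V → g` satisfying
`⟪D(a,b), x⟫ = (ρ(x)a, b)`, the ternary bracket `[a,b,c] := ρ(D(a,b)) c` on `V` is
antisymmetric in its first two arguments and satisfies the fundamental identity
`[a,b,[c,d,e]] = [[a,b,c],d,e] + [c,[a,b,d],e] + [c,d,[a,b,e]]`. -/
theorem generalizedMetric3Lie_of_lie2 {g V : Type*} [LieRing g] [LieAlgebra ℝ g]
    [AddCommGroup V] [Module ℝ V]
    (κ : g →ₗ[ℝ] g →ₗ[ℝ] ℝ)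
    (hκsymm : ∀ x y, κ x y = κ y x)
    (hκnondeg : ∀ x, (∀ y, κ x y = 0) → x = 0)
    (hκinv : ∀ x y z : g, κ ⁅x, y⁆ z + κ y ⁅x, z⁆ = 0)
    (ρ : g →ₗ⁅ℝ⁆ Module.End ℝ V)
    (Bf : V →ₗ[ℝ] V →ₗ[ℝ] ℝ)
    (hBsymm : ∀ a b, Bf a b = Bf b a)
    (hBinv : ∀ x a b, Bf (ρ x a) b + Bf a (ρ x b) = 0)
    (D : V →ₗ[ℝ] V →ₗ[ℝ] g)
    (hD : ∀ a b x, κ (D a b) x = Bf (ρ x a) b) :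
    (∀ a b c : V, ρ (D a b) c = - ρ (D b a) c) ∧
    (∀ a b c d e : V,
      ρ (D a b) (ρ (D c d) e)
        = ρ (D (ρ (D a b) c) d) e + ρ (D c (ρ (D a b) d)) e
          + ρ (D c d) (ρ (D a b) e)) := by
  have key : ∀ u v : g, (∀ x, κ u x = κ v x) → u = v := by
    intro u v h
    have h0 : ∀ x, κ (u - v) x = 0 := by
      intro x; simp [map_sub, h x]
    have := hκnondeg _ h0
    exact sub_eq_zero.mp this
  have hDanti : ∀ a b : V, D a b = - D b a := by
    intro a b
    apply key
    intro x
    have hi := hBinv x a b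
    have : Bf (ρ x a) b = - Bf (ρ x b) a := by
      rw [hBsymm (ρ x b) a]; linarith
    rw [hD a b x, this, ← hD b a x]; simp
  have hbr : ∀ a b c d : V,
      ⁅D a b, D c d⁆ = D (ρ (D a b) c) d + D c (ρ (D a b) d) := by
    intro a b c d
    apply key
    intro x
    have inv := hκinv (D a b) (D c d) x
    have h1 : κ (D c d) ⁅D a b, x⁆ = Bf (ρ ⁅D a b, x⁆ c) d := hD c d ⁅D a b, x⁆
    have hρ : ρ ⁅D a b, x⁆ c = ρ (D a b) (ρ x c) - ρ x (ρ (D a b) c) := by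
      rw [LieHom.map_lie]
      simp [Ring.lie_def, Module.End.mul_apply]
    have h2 : Bf (ρ (D a b) (ρ x c)) d = - Bf (ρ x c) (ρ (D a b) d) := by
      have := hBinv (D a b) (ρ x c) d; linarith
    have h3 : κ (D c (ρ (D a b) d)) x = Bf (ρ x c) (ρ (D a b) d) := hD _ _ x
    have h4 : κ (D (ρ (D a b) c) d) x = Bf (ρ x (ρ (D a b) c)) d := hD _ _ x
    have h5 : Bf (ρ ⁅D a b, x⁆ c) d
        = - Bf (ρ x c) (ρ (D a b) d) - Bf (ρ x (ρ (D a b) c)) d := by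
      rw [hρ, map_sub]; simp only [LinearMap.sub_apply]
      linarith
    have : κ ⁅D a b, D c d⁆ x
        = Bf (ρ x (ρ (D a b) c)) d + Bf (ρ x c) (ρ (D a b) d) := by
      rw [h1, h5] at inv; linarith
    rw [this, map_add, LinearMap.add_apply, h3, h4]
  refine ⟨?_, ?_⟩
  · intro a b c
    rw [hDanti a b]; simp
  · intro a b c d e
    have hb := hbr a b c d
    have happ : ρ ⁅D a b, D c d⁆ e
        = ρ (D a b) (ρ (D c d) e) - ρ (D c d) (ρ (D a b) e) := by
      rw [LieHom.map_lie]
      simp [Ring.lie_def, Module.End.mul_apply]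
    rw [hb, map_add, LinearMap.add_apply] at happ
    have := happ.symm
    rw [sub_eq_iff_eq_add] at this
    rw [this]
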